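/- Let h : [0, Q̄] → ℝ be p-Lipschitz and nonincreasing, with 0 ≤ c ≤ p. Then F(Q) = inf_{u ∈ [0, min(r, Q + x)]} [c·min(K, r − u) + p·max(0, r − u − K) + h(min(Q + x − u, Q̄))] is p-Lipschitz on [0, Q̄]. -/
import Mathlib

theorem stmt_10 (Qbar x r K c p : ℝ) (hQbar : 0 < Qbar) (hx : 0 ≤ x) (hr : 0 ≤ r)
    (hK : 0 ≤ K) (hc : 0 ≤ c) (hcp : c ≤ p)
    (h : ℝ → ℝ) (hhL : LipschitzOnWith (Real.toNNReal p) h (Set.Icc 0 Qbar))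
    (hh : AntitoneOn h (Set.Icc 0 Qbar)) :
    LipschitzOnWith (Real.toNNReal p) (fun Q : ℝ =>
      sInf ((fun u : ℝ => c * min K (r - u) + p * max 0 (r - u - K) +
        h (min (Q + x - u) Qbar)) '' Set.Icc 0 (min r (Q + x)))) (Set.Icc 0 Qbar) := by
  have hp : 0 ≤ p := hc.trans hcp
  have hcoe : ((Real.toNNReal p : NNReal) : ℝ) = p := Real.coe_toNNReal p hp
  set f : ℝ → ℝ → ℝ := fun Q u => c * min K (r - u) + p * max 0 (r - u - K) +
      h (min (Q + x - u) Qbar) with hfdef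
  set S : ℝ → Set ℝ := fun Q => f Q '' Set.Icc 0 (min r (Q + x)) with hSdef
  set F : ℝ → ℝ := fun Q => sInf (S Q) with hFdef
  -- h Lipschitz in usable form
  have hlip : ∀ a ∈ Set.Icc (0:ℝ) Qbar, ∀ b ∈ Set.Icc (0:ℝ) Qbar, a ≤ b →
      h a ≤ h b + p * (b - a) := by
    intro a ha b hb hab
    have hd := hhL.dist_le_mul a ha b hb
    rw [Real.dist_eq, Real.dist_eq, hcoe] at hd
    have h1 : h a - h b ≤ p * |a - b| := (abs_le.mp hd).2
    have h2 : |a - b| = b - a := by rw [abs_sub_comm]; exact abs_of_nonneg (by linarith)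
    rw [h2] at h1; linarith
  -- membership of arguments in Icc 0 Qbar
  have harg : ∀ Q ∈ Set.Icc (0:ℝ) Qbar, ∀ u ∈ Set.Icc 0 (min r (Q + x)),
      min (Q + x - u) Qbar ∈ Set.Icc (0:ℝ) Qbar := by
    intro Q hQ u hu
    constructor
    · have : u ≤ Q + x := le_trans hu.2 (min_le_right _ _)
      exact le_min (by linarith) hQbar.le
    · exact min_le_right _ _
  -- lower bound on elements of S Q
  have hbdd : ∀ Q ∈ Set.Icc (0:ℝ) Qbar, ∀ v ∈ S Q, h Qbar ≤ v := by
    intro Q hQ v hv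
    obtain ⟨u, hu, rfl⟩ := hv
    have hur : u ≤ r := le_trans hu.2 (min_le_left _ _)
    have h1 : 0 ≤ c * min K (r - u) := mul_nonneg hc (le_min hK (by linarith))
    have h2 : 0 ≤ p * max 0 (r - u - K) := mul_nonneg hp (le_max_left _ _)
    have h3 : h Qbar ≤ h (min (Q + x - u) Qbar) :=
      hh (harg Q hQ u hu) (Set.right_mem_Icc.mpr (by linarith [hQbar.le])) (min_le_right _ _)
    simp only [f]; linarith
  have hBdd : ∀ Q ∈ Set.Icc (0:ℝ) Qbar, BddBelow (S Q) := fun Q hQ => ⟨h Qbar, hbdd Q hQ⟩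
  have hNe : ∀ Q ∈ Set.Icc (0:ℝ) Qbar, (S Q).Nonempty := by
    intro Q hQ
    exact ⟨f Q 0, 0, Set.mem_Icc.mpr ⟨le_refl 0, le_min hr (by linarith [hQ.1])⟩, rfl⟩
  -- key inequalities
  have key : ∀ Q₁ ∈ Set.Icc (0:ℝ) Qbar, ∀ Q₂ ∈ Set.Icc (0:ℝ) Qbar, Q₁ ≤ Q₂ →
      F Q₂ ≤ F Q₁ ∧ F Q₁ ≤ F Q₂ + p * (Q₂ - Q₁) := by
    intro Q₁ hQ₁ Q₂ hQ₂ h12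
    constructor
    · -- F Q₂ ≤ F Q₁
      apply le_csInf (hNe Q₁ hQ₁)
      rintro b ⟨u, hu, rfl⟩
      have hu2 : u ∈ Set.Icc (0:ℝ) (min r (Q₂ + x)) :=
        ⟨hu.1, le_trans hu.2 (min_le_min (le_refl r) (by linarith))⟩
      have hmem : f Q₂ u ∈ S Q₂ := ⟨u, hu2, rfl⟩
      have hle : f Q₂ u ≤ f Q₁ u := by
        have : h (min (Q₂ + x - u) Qbar) ≤ h (min (Q₁ + x - u) Qbar) :=
          hh (harg Q₁ hQ₁ u hu) (harg Q₂ hQ₂ u hu2)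
            (min_le_min (by linarith) (le_refl Qbar))
        simp only [f]; linarith
      exact le_trans (csInf_le (hBdd Q₂ hQ₂) hmem) hle
    · -- F Q₁ ≤ F Q₂ + p*(Q₂ - Q₁)
      have : F Q₁ - p * (Q₂ - Q₁) ≤ F Q₂ := by
        apply le_csInf (hNe Q₂ hQ₂)
        rintro b ⟨u, hu, rfl⟩
        set u' := min u (Q₁ + x) with hu'def
        have hu'mem : u' ∈ Set.Icc (0:ℝ) (min r (Q₁ + x)) := by
          constructor
          · exact le_min hu.1 (by linarith [hQ₁.1])
          · exact le_min (le_trans (min_le_left _ _) (le_trans hu.2 (min_le_left _ _)))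
              (min_le_right _ _)
        have hmem : f Q₁ u' ∈ S Q₁ := ⟨u', hu'mem, rfl⟩
        have hstep : f Q₁ u' ≤ f Q₂ u + p * (Q₂ - Q₁) := by
          have hu'le : u' ≤ u := min_le_left _ _
          have hdelta : u - u' ≤ Q₂ - Q₁ := by
            have huQ2 : u ≤ Q₂ + x := le_trans hu.2 (min_le_right _ _)
            rcases min_cases u (Q₁ + x) with ⟨he, _⟩ | ⟨he, _⟩ <;> simp only [u', he] <;> linarith
          -- running cost bound: c*δ₁ + p*δ₂ ≤ p*(u - u') since δ₁+δ₂ = u - u', δᵢ ≥ 0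
          have hrun : c * min K (r - u') + p * max 0 (r - u' - K) ≤
              c * min K (r - u) + p * max 0 (r - u - K) + p * (u - u') := by
            have hd1 : 0 ≤ min K (r - u') - min K (r - u) := by
              rcases min_cases K (r - u) with ⟨he, h'⟩ | ⟨he, h'⟩ <;> rw [he]
              · exact sub_nonneg.mpr (le_min_iff.mpr ⟨le_refl K, by linarith⟩)
              · rcases min_cases K (r - u') with ⟨he2, h2⟩ | ⟨he2, h2⟩ <;> rw [he2] <;> linarith
            have hd2 : 0 ≤ max 0 (r - u' - K) - max 0 (r - u - K) := by
              rcases max_cases 0 (r - u - K) with ⟨he, h'⟩ | ⟨he, h'⟩ <;> rw [he]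
              · exact sub_nonneg.mpr (le_max_left _ _)
              · rcases max_cases 0 (r - u' - K) with ⟨he2, h2⟩ | ⟨he2, h2⟩ <;> rw [he2] <;> linarith
            have hphi : ∀ t : ℝ, min K t + max 0 (t - K) = t := by
              intro t
              rcases le_total t K with ht | ht
              · rw [min_eq_right ht, max_eq_left (by linarith)]; ring
              · rw [min_eq_left ht, max_eq_right (by linarith)]; ring
            have hsum : (min K (r - u') - min K (r - u)) +
                (max 0 (r - u' - K) - max 0 (r - u - K)) = u - u' := by
              have e1 := hphi (r - u')
              have e2 := hphi (r - u)
              linarith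
            nlinarith [mul_nonneg hd1 (sub_nonneg.mpr hcp)]
          -- h term bound
          have hm12 : min (Q₁ + x - u') Qbar ≤ min (Q₂ + x - u) Qbar :=
            min_le_min (by linarith) (le_refl Qbar)
          have hmd : min (Q₂ + x - u) Qbar - min (Q₁ + x - u') Qbar ≤
              (Q₂ - Q₁) - (u - u') := by
            rcases min_cases (Q₁ + x - u') Qbar with ⟨he, h'⟩ | ⟨he, h'⟩ <;> rw [he]
            · have := min_le_left (Q₂ + x - u) Qbar; linarith
            · have := min_le_right (Q₂ + x - u) Qbar; linarith
          have hhterm : h (min (Q₁ + x - u') Qbar) ≤ h (min (Q₂ + x - u) Qbar) +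
              p * ((Q₂ - Q₁) - (u - u')) := by
            have := hlip _ (harg Q₁ hQ₁ u' hu'mem) _ (harg Q₂ hQ₂ u hu) hm12
            nlinarith [this, mul_le_mul_of_nonneg_left hmd hp]
          simp only [f]; linarith
        have := csInf_le (hBdd Q₁ hQ₁) hmem
        simp only [F] at *
        linarith
      linarith
  rw [lipschitzOnWith_iff_dist_le_mul]
  intro Q₁ hQ₁ Q₂ hQ₂
  rw [Real.dist_eq, Real.dist_eq, hcoe]
  rcases le_total Q₁ Q₂ with h12 | h21
  · obtain ⟨k1, k2⟩ := key Q₁ hQ₁ Q₂ hQ₂ h12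
    have habs : |Q₁ - Q₂| = Q₂ - Q₁ := by rw [abs_sub_comm]; exact abs_of_nonneg (by linarith)
    rw [habs, abs_le]
    constructor <;> simp only [F] at * <;> [linarith; linarith]
  · obtain ⟨k1, k2⟩ := key Q₂ hQ₂ Q₁ hQ₁ h21
    have habs : |Q₁ - Q₂| = Q₁ - Q₂ := abs_of_nonneg (by linarith)
    rw [habs, abs_le]
    constructor <;> simp only [F] at * <;> [linarith; linarith]
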